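/- arXiv:2605.26614 — 2 statements merged into one kernel-verified Lean document; each statement's English description precedes it below -/
import Mathlib

section
/- Let H be a bipartite graph with v vertices and e edges, v ≤ e, and set s = 2e/v and s' = 2e/(2e-v). Suppose that for every graph G with adjacency matrix A one has hom(H, G) ≥ ‖A‖_{s'→s}^e. Then for every graph G with M(G) = 2e(G) > 0, hom(H, G) ≥ λ(G)^{2e-v} · M(G)^{v-e}. -/
open scoped Classical BigOperators

/-- Adjacency matrix of a simple graph on `Fin n`, with real entries. -/
noncomputable def adjMat {n : ℕ} (G : SimpleGraph (Fin n)) : Matrix (Fin n) (Fin n) ℝ :=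
  fun i j => if G.Adj i j then 1 else 0

/-- Spectral radius (largest real eigenvalue) of a real matrix. -/
noncomputable def specRad {α : Type*} [Fintype α] (A : Matrix α α ℝ) : ℝ :=
  sSup {μ : ℝ | ∃ x : α → ℝ, x ≠ 0 ∧ A.mulVec x = μ • x}

/-- The ℓ^p norm of a finitely supported real vector, for a real exponent `p`. -/
noncomputable def pNorm {α : Type*} [Fintype α] (p : ℝ) (x : α → ℝ) : ℝ :=
  (∑ i, |x i| ^ p) ^ (1 / p)

/-- The ℓ^p → ℓ^r operator norm of a real matrix. -/
noncomputable def opNorm {α β : Type*} [Fintype α] [Fintype β] (p r : ℝ)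
    (A : Matrix β α ℝ) : ℝ :=
  sSup {c : ℝ | ∃ x : α → ℝ, x ≠ 0 ∧ c = pNorm r (A.mulVec x) / pNorm p x}

open Finset Real

section aux
variable {ι : Type*} [Fintype ι]

/-- generalized two-term Hölder / weighted AM-GM for sums -/
lemma genHolder (F D : ι → ℝ) (hF : ∀ i, 0 ≤ F i) (hD : ∀ i, 0 ≤ D i)
    {a b : ℝ} (ha : 0 < a) (hb : 0 ≤ b) (hab : a + b = 1) :
    ∑ i, F i ^ a * D i ^ b ≤ (∑ i, F i) ^ a * (∑ i, D i) ^ b := by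
  rcases eq_or_lt_of_le hb with hb0 | hb0
  · have ha1 : a = 1 := by linarith
    simp [← hb0, ha1]
  · have hpq : Real.HolderConjugate (1/a) (1/b) := by
      have := Real.HolderConjugate.inv_inv ha hb0 hab
      simpa [one_div] using this
    have h := Real.inner_le_Lp_mul_Lq_of_nonneg (univ : Finset ι) hpq
      (f := fun i => F i ^ a) (g := fun i => D i ^ b)
      (fun i _ => rpow_nonneg (hF i) a) (fun i _ => rpow_nonneg (hD i) b)
    have e1 : ∀ i, (F i ^ a) ^ (1/a) = F i := fun i => by
      rw [← Real.rpow_mul (hF i), mul_one_div_cancel ha.ne', Real.rpow_one]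
    have e2 : ∀ i, (D i ^ b) ^ (1/b) = D i := fun i => by
      rw [← Real.rpow_mul (hD i), mul_one_div_cancel hb0.ne', Real.rpow_one]
    simp only [e1, e2, one_div_one_div] at h
    exact h

lemma pNorm_nonneg (p : ℝ) (x : ι → ℝ) : 0 ≤ pNorm p x :=
  Real.rpow_nonneg (Finset.sum_nonneg fun i _ => Real.rpow_nonneg (abs_nonneg _) _) _

lemma pNorm_pos {p : ℝ} {x : ι → ℝ} (hx : x ≠ 0) : 0 < pNorm p x := by
  obtain ⟨j, hj⟩ : ∃ j, x j ≠ 0 := by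
    by_contra h; push_neg at h; exact hx (funext h)
  apply Real.rpow_pos_of_pos
  exact Finset.sum_pos' (fun i _ => Real.rpow_nonneg (abs_nonneg _) _)
    ⟨j, Finset.mem_univ j, Real.rpow_pos_of_pos (abs_pos.2 hj) _⟩

lemma opNorm_nonneg (p r : ℝ) (A : Matrix ι ι ℝ) : 0 ≤ opNorm p r A := by
  apply Real.sSup_nonneg
  rintro c ⟨x, hx, rfl⟩
  exact div_nonneg (pNorm_nonneg _ _) (pNorm_nonneg _ _)

lemma opNorm_mulVec_le {p r : ℝ} {A : Matrix ι ι ℝ}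
    (hB : BddAbove {c : ℝ | ∃ x : ι → ℝ, x ≠ 0 ∧ c = pNorm r (A.mulVec x) / pNorm p x})
    (x : ι → ℝ) (hx : x ≠ 0) :
    pNorm r (A.mulVec x) ≤ opNorm p r A * pNorm p x := by
  have hmem : pNorm r (A.mulVec x) / pNorm p x ∈
      {c : ℝ | ∃ x : ι → ℝ, x ≠ 0 ∧ c = pNorm r (A.mulVec x) / pNorm p x} := ⟨x, hx, rfl⟩
  have h := le_csSup hB hmem
  rw [div_le_iff₀ (pNorm_pos hx)] at h
  exact h

end aux

lemma adjMat_nonneg {n : ℕ} (G : SimpleGraph (Fin n)) (i j : Fin n) : 0 ≤ adjMat G i j := by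
  unfold adjMat; split <;> norm_num

lemma adjMat_le_one {n : ℕ} (G : SimpleGraph (Fin n)) (i j : Fin n) : adjMat G i j ≤ 1 := by
  unfold adjMat; split <;> norm_num

lemma mulVec_eq {n : ℕ} (A : Matrix (Fin n) (Fin n) ℝ) (z : Fin n → ℝ) (i : Fin n) :
    A.mulVec z i = ∑ j, A i j * z j := rfl

lemma bddAbove_opSet {n : ℕ} (G : SimpleGraph (Fin n)) {p r : ℝ}
    (hpq : Real.HolderConjugate p r) :
    BddAbove {c : ℝ | ∃ x : Fin n → ℝ, x ≠ 0 ∧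
      c = pNorm r ((adjMat G).mulVec x) / pNorm p x} := by
  have hr0 : (0:ℝ) < r := hpq.symm.pos
  refine ⟨(n:ℝ) ^ (1/r) * (n:ℝ) ^ (1/r), ?_⟩
  rintro c ⟨x, hx, rfl⟩
  rw [div_le_iff₀ (pNorm_pos hx)]
  set A := adjMat G
  -- Hölder: ∑ |x j| ≤ pNorm p x * n^(1/r)
  have hH := Real.inner_le_Lp_mul_Lq_of_nonneg (univ : Finset (Fin n)) hpq
    (f := fun j => |x j|) (g := fun _ => (1:ℝ)) (fun i _ => abs_nonneg _)
    (fun i _ => zero_le_one)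
  have hone : (∑ _j : Fin n, (1:ℝ) ^ r) ^ (1/r) = (n:ℝ) ^ (1/r) := by
    simp [Real.one_rpow]
  rw [hone] at hH
  simp only [mul_one] at hH
  -- per-coordinate bound
  have hB : ∀ i, |A.mulVec x i| ≤ pNorm p x * (n:ℝ) ^ (1/r) := by
    intro i
    refine le_trans ?_ hH
    rw [mulVec_eq]
    refine (Finset.abs_sum_le_sum_abs _ _).trans ?_
    apply Finset.sum_le_sum
    intro j _
    rw [abs_mul, abs_of_nonneg (adjMat_nonneg G i j)]
    exact mul_le_of_le_one_left (abs_nonneg _) (adjMat_le_one G i j)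
  have hBnn : 0 ≤ pNorm p x * (n:ℝ) ^ (1/r) :=
    mul_nonneg (pNorm_nonneg _ _) (Real.rpow_nonneg (Nat.cast_nonneg n) _)
  -- sum up
  have h1 : pNorm r (A.mulVec x) ≤ ((n:ℝ) * (pNorm p x * (n:ℝ) ^ (1/r)) ^ r) ^ (1/r) := by
    unfold pNorm
    apply Real.rpow_le_rpow (Finset.sum_nonneg fun i _ => Real.rpow_nonneg (abs_nonneg _) _)
      ?_ (by positivity)
    calc ∑ i, |A.mulVec x i| ^ r ≤ ∑ _i : Fin n, (pNorm p x * (n:ℝ) ^ (1/r)) ^ r :=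
          Finset.sum_le_sum fun i _ => Real.rpow_le_rpow (abs_nonneg _) (hB i) hr0.le
      _ = (n:ℝ) * (pNorm p x * (n:ℝ) ^ (1/r)) ^ r := by
          simp [Finset.sum_const, nsmul_eq_mul]
  refine h1.trans (le_of_eq ?_)
  rw [Real.mul_rpow (Nat.cast_nonneg n) (Real.rpow_nonneg hBnn _),
    ← Real.rpow_mul hBnn, mul_one_div_cancel hr0.ne', Real.rpow_one]
  ring

lemma eig_bound {n : ℕ} (G : SimpleGraph (Fin n)) {E V : ℝ} (hV : 0 < V) (hVE : V ≤ E)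
    {μ : ℝ} {y : Fin n → ℝ} (hy : y ≠ 0) (heig : (adjMat G).mulVec y = μ • y) :
    |μ| ≤ opNorm (2*E/(2*E-V)) (2*E/V) (adjMat G) ^ (E/(2*E-V)) *
      (∑ i, ∑ j, adjMat G i j) ^ (1 - E/(2*E-V)) := by
  set A := adjMat G with hAdef
  have hE : 0 < E := lt_of_lt_of_le hV hVE
  have hDen : 0 < 2*E - V := by linarith
  set s' := 2*E/(2*E-V) with hs'def
  set s := 2*E/V with hsdef
  set θ := E/(2*E-V) with hθdef
  have hs'1 : 1 < s' := by rw [hs'def, lt_div_iff₀ hDen]; linarith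
  have hs1 : 1 < s := by rw [hsdef, lt_div_iff₀ hV]; linarith
  have hs'0 : 0 < s' := lt_trans zero_lt_one hs'1
  have hs0 : 0 < s := lt_trans zero_lt_one hs1
  have hθ0 : 0 < θ := div_pos hE hDen
  have hθ1 : θ ≤ 1 := by rw [hθdef, div_le_one hDen]; linarith
  have hconj : Real.HolderConjugate s' s := by
    rw [Real.holderConjugate_iff]; constructor
    · exact hs'1
    · rw [hs'def, hsdef]
      field_simp
      ring
  set N := opNorm s' s A with hNdef
  have hN0 : 0 ≤ N := opNorm_nonneg _ _ _
  set x : Fin n → ℝ := fun i => |y i| with hxdef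
  have hx0 : ∀ i, 0 ≤ x i := fun i => abs_nonneg _
  set t := ∑ i, x i ^ (2:ℝ) with htdef
  have ht0 : 0 < t := by
    obtain ⟨j, hj⟩ : ∃ j, y j ≠ 0 := by
      by_contra h; push_neg at h; exact hy (funext h)
    exact Finset.sum_pos' (fun i _ => Real.rpow_nonneg (hx0 i) _)
      ⟨j, Finset.mem_univ j, Real.rpow_pos_of_pos (abs_pos.2 hj) _⟩
  set u : Fin n → ℝ := fun i => x i ^ (1/θ : ℝ) with hudef
  have hu0 : ∀ i, 0 ≤ u i := fun i => Real.rpow_nonneg (hx0 i) _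
  have hxu : ∀ i, x i = u i ^ θ := by
    intro i
    rw [hudef]
    dsimp only
    rw [← Real.rpow_mul (hx0 i), one_div_mul_cancel hθ0.ne', Real.rpow_one]
  have hus' : ∀ i, u i ^ s' = x i ^ (2:ℝ) := by
    intro i
    rw [hudef]
    dsimp only
    rw [← Real.rpow_mul (hx0 i)]
    congr 1
    rw [hθdef, hs'def]
    field_simp [hE.ne']
    exact div_self (by linarith)
  set g := A.mulVec u with hgdef
  have hg0 : ∀ i, 0 ≤ g i := by
    intro i
    rw [hgdef, mulVec_eq]
    exact Finset.sum_nonneg fun j _ => mul_nonneg (adjMat_nonneg G i j) (hu0 j)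
  set d : Fin n → ℝ := fun i => ∑ j, A i j with hddef
  have hd0 : ∀ i, 0 ≤ d i := fun i => Finset.sum_nonneg fun j _ => adjMat_nonneg G i j
  have hAx0 : ∀ i, 0 ≤ A.mulVec x i := by
    intro i
    rw [mulVec_eq]
    exact Finset.sum_nonneg fun j _ => mul_nonneg (adjMat_nonneg G i j) (hx0 j)
  -- Step C1
  have C1 : ∀ i, A.mulVec x i ≤ g i ^ θ * d i ^ (1-θ) := by
    intro i
    have hrw : A.mulVec x i = ∑ j, (A i j * u j) ^ θ * (A i j) ^ (1-θ) := by
      rw [mulVec_eq]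
      refine Finset.sum_congr rfl fun j _ => ?_
      rw [Real.mul_rpow (adjMat_nonneg G i j) (hu0 j), hxu j]
      have h1 : A i j ^ θ * A i j ^ (1-θ) = A i j := by
        rw [← Real.rpow_add' (adjMat_nonneg G i j) (by norm_num : θ + (1-θ) ≠ 0)]
        norm_num; rfl
      calc A i j * u j ^ θ = (A i j ^ θ * A i j ^ (1-θ)) * u j ^ θ := by rw [h1]
        _ = A i j ^ θ * u j ^ θ * A i j ^ (1-θ) := by ring
    rw [hrw]
    have h := genHolder (a := θ) (b := 1-θ) (fun j => A i j * u j) (fun j => A i j)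
      (fun j => mul_nonneg (adjMat_nonneg G i j) (hu0 j)) (fun j => adjMat_nonneg G i j)
      hθ0 (by linarith) (by ring)
    have hge : ∑ j, A i j * u j = g i := by rw [hgdef, mulVec_eq]
    have hde : ∑ j, A i j = d i := by rw [hddef]
    rwa [hge, hde] at h
  -- Step C2
  set Q := ∑ i, A.mulVec x i * x i with hQdef
  have C2 : Q ≤ (∑ i, (A.mulVec x i) ^ (2:ℝ)) ^ (1/2:ℝ) * t ^ (1/2:ℝ) := by
    have h := genHolder (a := (1/2:ℝ)) (b := (1/2:ℝ))
      (fun i => (A.mulVec x i) ^ (2:ℝ)) (fun i => x i ^ (2:ℝ))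
      (fun i => Real.rpow_nonneg (hAx0 i) _) (fun i => Real.rpow_nonneg (hx0 i) _)
      (by norm_num) (by norm_num) (by norm_num)
    have e1 : ∀ i, ((A.mulVec x i) ^ (2:ℝ)) ^ (1/2:ℝ) = A.mulVec x i := by
      intro i; rw [← Real.rpow_mul (hAx0 i)]; norm_num
    have e2 : ∀ i, (x i ^ (2:ℝ)) ^ (1/2:ℝ) = x i := by
      intro i; rw [← Real.rpow_mul (hx0 i)]; norm_num
    simp only [e1, e2] at h
    rw [hQdef]
    exact h
  -- Step C3
  set a := 2*θ/s with hadef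
  set b := 2*(1-θ) with hbdef
  have ha0 : 0 < a := by positivity
  have hb0 : 0 ≤ b := by rw [hbdef]; linarith
  have hab : a + b = 1 := by
    rw [hadef, hbdef, hθdef, hsdef]
    field_simp
    ring
  have hsa : s * a = 2*θ := by
    rw [hadef]; field_simp
  have C3 : ∑ i, (A.mulVec x i) ^ (2:ℝ) ≤ (∑ i, g i ^ s) ^ a * (∑ i, d i) ^ b := by
    have step1 : ∀ i, (A.mulVec x i) ^ (2:ℝ) ≤ (g i ^ s) ^ a * d i ^ b := by
      intro i
      have h1 : (A.mulVec x i) ^ (2:ℝ) ≤ (g i ^ θ * d i ^ (1-θ)) ^ (2:ℝ) :=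
        Real.rpow_le_rpow (hAx0 i) (C1 i) (by norm_num)
      refine h1.trans (le_of_eq ?_)
      rw [Real.mul_rpow (Real.rpow_nonneg (hg0 i) _) (Real.rpow_nonneg (hd0 i) _),
        ← Real.rpow_mul (hg0 i), ← Real.rpow_mul (hd0 i), ← Real.rpow_mul (hg0 i)]
      congr 1
      · congr 1
        rw [hsa]; ring
      · congr 1
        rw [hbdef]; ring
    calc ∑ i, (A.mulVec x i) ^ (2:ℝ) ≤ ∑ i, (g i ^ s) ^ a * d i ^ b :=
          Finset.sum_le_sum fun i _ => step1 i
      _ ≤ (∑ i, g i ^ s) ^ a * (∑ i, d i) ^ b :=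
          genHolder (a := a) (b := b) _ _ (fun i => Real.rpow_nonneg (hg0 i) _) hd0 ha0 hb0 hab
  -- Step C4 : operator norm bound
  have hop : pNorm s (A.mulVec u) ≤ N * pNorm s' u :=
    by
      by_cases hu : u = 0
      · have hx00 : x = 0 := by
          funext i
          have := hxu i
          rw [hu] at this
          simpa [Real.zero_rpow hθ0.ne'] using this
        exfalso
        have : t = 0 := by
          rw [htdef]
          refine Finset.sum_eq_zero fun i _ => ?_
          rw [hx00]
          simp [Real.zero_rpow (two_ne_zero)]
        linarith
      · exact opNorm_mulVec_le (bddAbove_opSet G hconj) u hu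
  have hpu : pNorm s' u = t ^ (1/s' : ℝ) := by
    unfold pNorm
    congr 1
    refine Finset.sum_congr rfl fun i _ => ?_
    rw [abs_of_nonneg (hu0 i), hus' i]
  have hpg : pNorm s (A.mulVec u) = (∑ i, g i ^ s) ^ (1/s : ℝ) := by
    unfold pNorm
    congr 1
    exact Finset.sum_congr rfl fun i _ => by rw [← hgdef, abs_of_nonneg (hg0 i)]
  have hgs0 : 0 ≤ ∑ i, g i ^ s := Finset.sum_nonneg fun i _ => Real.rpow_nonneg (hg0 i) _
  have C4 : (∑ i, g i ^ s) ≤ (N * t ^ (1/s':ℝ)) ^ s := by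
    have h := hop
    rw [hpg, hpu] at h
    have h2 := Real.rpow_le_rpow (Real.rpow_nonneg hgs0 _) h hs0.le
    rwa [← Real.rpow_mul hgs0, one_div_mul_cancel hs0.ne', Real.rpow_one] at h2
  -- combine C2, C3, C4
  have hT0 : 0 ≤ N * t ^ (1/s':ℝ) := mul_nonneg hN0 (Real.rpow_nonneg ht0.le _)
  have hDsum0 : 0 ≤ ∑ i, d i := Finset.sum_nonneg fun i _ => hd0 i
  have step : Q ≤ N ^ θ * (∑ i, d i) ^ (1-θ) * t := by
    have h1 : Q ≤ (((N * t ^ (1/s':ℝ)) ^ s) ^ a * (∑ i, d i) ^ b) ^ (1/2:ℝ) * t ^ (1/2:ℝ) := by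
      have inner : (∑ i, g i ^ s) ^ a * (∑ i, d i) ^ b
          ≤ ((N * t ^ (1/s':ℝ)) ^ s) ^ a * (∑ i, d i) ^ b :=
        mul_le_mul_of_nonneg_right (Real.rpow_le_rpow hgs0 C4 ha0.le)
          (Real.rpow_nonneg hDsum0 _)
      refine C2.trans (mul_le_mul_of_nonneg_right
        (Real.rpow_le_rpow (Finset.sum_nonneg fun i _ => Real.rpow_nonneg (hAx0 i) _)
          (C3.trans inner) (by norm_num)) (Real.rpow_nonneg ht0.le _))
    refine h1.trans (le_of_eq ?_)
    -- pure rpow algebra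
    rw [← Real.rpow_mul hT0, hsa]
    rw [Real.mul_rpow hN0 (Real.rpow_nonneg ht0.le _)]
    rw [← Real.rpow_mul ht0.le]
    have hexp : (1/s') * (2*θ) = 1 := by
      rw [hs'def, hθdef]; field_simp
    rw [hexp, Real.rpow_one]
    rw [Real.mul_rpow (mul_nonneg (Real.rpow_nonneg hN0 _) ht0.le) (Real.rpow_nonneg hDsum0 _),
      Real.mul_rpow (Real.rpow_nonneg hN0 _) ht0.le,
      ← Real.rpow_mul hN0, ← Real.rpow_mul hDsum0]
    have e3 : 2*θ*(1/2:ℝ) = θ := by ring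
    have e4 : b*(1/2:ℝ) = 1-θ := by rw [hbdef]; ring
    rw [e3, e4]
    have e5 : t ^ (1/2:ℝ) * t ^ (1/2:ℝ) = t := by
      rw [← Real.rpow_add ht0]; norm_num
    calc N ^ θ * t ^ (1/2:ℝ) * (∑ i, d i) ^ (1-θ) * t ^ (1/2:ℝ)
        = N ^ θ * (∑ i, d i) ^ (1-θ) * (t ^ (1/2:ℝ) * t ^ (1/2:ℝ)) := by ring
      _ = N ^ θ * (∑ i, d i) ^ (1-θ) * t := by rw [e5]
  -- Step 1: |μ| * t ≤ Q
  have hμt : |μ| * t ≤ Q := by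
    have h1 : ∑ i, A.mulVec y i * y i = μ * t := by
      rw [heig]
      have : ∀ i, (μ • y) i * y i = μ * (x i ^ (2:ℝ)) := by
        intro i
        rw [Pi.smul_apply, smul_eq_mul, hxdef]
        dsimp only
        rw [show ((2:ℝ)) = ((2:ℕ):ℝ) by norm_num, Real.rpow_natCast, sq_abs]
        ring
      rw [Finset.sum_congr rfl fun i _ => this i, ← Finset.mul_sum, htdef]
    have h2 : |∑ i, A.mulVec y i * y i| ≤ Q := by
      refine (Finset.abs_sum_le_sum_abs _ _).trans ?_
      apply Finset.sum_le_sum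
      intro i _
      rw [abs_mul]
      have hAy : |A.mulVec y i| ≤ A.mulVec x i := by
        rw [mulVec_eq, mulVec_eq]
        refine (Finset.abs_sum_le_sum_abs _ _).trans ?_
        apply Finset.sum_le_sum
        intro j _
        rw [abs_mul]
        exact le_of_eq (by rw [abs_of_nonneg (adjMat_nonneg G i j)])
      exact mul_le_mul_of_nonneg_right hAy (abs_nonneg _)
    rw [h1, abs_mul, abs_of_nonneg ht0.le] at h2
    exact h2
  have final : |μ| * t ≤ N ^ θ * (∑ i, d i) ^ (1-θ) * t := hμt.trans step
  exact le_of_mul_le_mul_right final ht0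

lemma sum_adjMat {n : ℕ} (G : SimpleGraph (Fin n)) :
    ∑ i, ∑ j, adjMat G i j = 2 * (Nat.card G.edgeSet : ℝ) := by
  have hrow : ∀ i, ∑ j, adjMat G i j = (G.degree i : ℝ) := by
    intro i
    unfold adjMat
    rw [Finset.sum_boole]
    congr 1
    rw [SimpleGraph.degree, SimpleGraph.neighborFinset_eq_filter]
  rw [Finset.sum_congr rfl fun i _ => hrow i]
  have := SimpleGraph.sum_degrees_eq_twice_card_edges G
  have hcast : (∑ i, (G.degree i : ℝ)) = ((∑ i, G.degree i : ℕ) : ℝ) := by push_cast; rfl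
  rw [hcast, this]
  push_cast
  congr 1
  rw [Nat.card_eq_fintype_card, SimpleGraph.edgeFinset_card]


/-- If a bipartite graph H with v vertices and e edges, v ≤ e, satisfies the
operator-norm Sidorenko certificate hom(H,G) ≥ ‖A(G)‖_{s'→s}^e for every graph G
(where s = 2e/v, s' = 2e/(2e-v)), then H satisfies the edge-spectral Sidorenko
inequality hom(H,G) ≥ λ(G)^{2e-v} M(G)^{v-e} for every graph G with M(G) > 0. -/
theorem stmt3 (v e : ℕ) (hv : 0 < v) (hve : v ≤ e) (H : SimpleGraph (Fin v))
    (hbip : H.Colorable 2) (hedges : Nat.card H.edgeSet = e)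
    (hcert : ∀ (n : ℕ) (G : SimpleGraph (Fin n)),
      (Nat.card (H →g G) : ℝ)
        ≥ opNorm ((2 * e : ℝ) / (2 * e - v)) ((2 * e : ℝ) / v) (adjMat G) ^ e) :
    ∀ (n : ℕ) (G : SimpleGraph (Fin n)), 0 < Nat.card G.edgeSet →
      (Nat.card (H →g G) : ℝ)
        ≥ specRad (adjMat G) ^ (2 * e - v)
            * (2 * (Nat.card G.edgeSet : ℝ)) ^ ((v : ℤ) - (e : ℤ)) := by
  intro n G hMpos
  have hV : (0:ℝ) < v := by exact_mod_cast hv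
  have hE : (0:ℝ) < e := by exact_mod_cast lt_of_lt_of_le hv hve
  have hVE : (v:ℝ) ≤ (e:ℝ) := by exact_mod_cast hve
  have hDen : (0:ℝ) < 2*(e:ℝ) - v := by linarith
  set A := adjMat G with hAdef
  set N := opNorm ((2 * e : ℝ) / (2 * e - v)) ((2 * e : ℝ) / v) A with hNdef
  have hN0 : 0 ≤ N := opNorm_nonneg _ _ _
  set M : ℝ := 2 * (Nat.card G.edgeSet : ℝ) with hMdef
  have hM0 : 0 < M := by
    rw [hMdef]
    have : (0:ℝ) < (Nat.card G.edgeSet : ℝ) := by exact_mod_cast hMpos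
    linarith
  set θ := (e:ℝ)/(2*(e:ℝ)-v) with hθdef
  have hθ0 : 0 < θ := div_pos hE hDen
  set C := N ^ θ * M ^ (1-θ) with hCdef
  have hC0 : 0 ≤ C :=
    mul_nonneg (Real.rpow_nonneg hN0 _) (Real.rpow_nonneg hM0.le _)
  have keyabs : ∀ μ ∈ {μ : ℝ | ∃ x : Fin n → ℝ, x ≠ 0 ∧ A.mulVec x = μ • x}, |μ| ≤ C := by
    rintro μ ⟨y, hy, heig⟩
    have h := eig_bound G hV hVE hy heig
    rwa [sum_adjMat G, ← hMdef, ← hNdef, ← hθdef, ← hCdef] at h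
  have key : |specRad A| ≤ C := by
    rw [abs_le]
    constructor
    · rcases Set.eq_empty_or_nonempty
        {μ : ℝ | ∃ x : Fin n → ℝ, x ≠ 0 ∧ A.mulVec x = μ • x} with hS | ⟨μ₀, hμ₀⟩
      · unfold specRad
        rw [hS, Real.sSup_empty]
        linarith
      · have h1 : -C ≤ μ₀ := (abs_le.1 (keyabs μ₀ hμ₀)).1
        have h2 : μ₀ ≤ specRad A :=
          le_csSup ⟨C, fun μ hμ => (abs_le.1 (keyabs μ hμ)).2⟩ hμ₀
        linarith
    · exact Real.sSup_le (fun μ hμ => (abs_le.1 (keyabs μ hμ)).2) hC0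
  -- assemble
  rw [ge_iff_le]
  refine le_trans ?_ (hcert n G)
  have h2 : specRad A ^ (2*e - v) ≤ C ^ (2*e - v) := by
    calc specRad A ^ (2*e-v) ≤ |specRad A ^ (2*e-v)| := le_abs_self _
      _ = |specRad A| ^ (2*e-v) := abs_pow _ _
      _ ≤ C ^ (2*e-v) := pow_le_pow_left₀ (abs_nonneg _) key _
  have h3 : C ^ (2*e - v) = N ^ e * M ^ (e - v) := by
    rw [← Real.rpow_natCast C (2*e-v)]
    have hcast1 : ((2*e-v : ℕ) : ℝ) = 2*(e:ℝ) - v := by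
      push_cast [Nat.cast_sub (by omega : v ≤ 2*e)]
      ring
    rw [hcast1, hCdef,
      Real.mul_rpow (Real.rpow_nonneg hN0 _) (Real.rpow_nonneg hM0.le _),
      ← Real.rpow_mul hN0, ← Real.rpow_mul hM0.le]
    have he1 : θ * (2*(e:ℝ) - v) = (e:ℝ) := by
      rw [hθdef]; field_simp; exact div_self (by linarith)
    have he2 : (1-θ) * (2*(e:ℝ) - v) = ((e - v : ℕ) : ℝ) := by
      push_cast [Nat.cast_sub hve]
      rw [hθdef, sub_mul, div_mul_cancel₀ _ hDen.ne']; ring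
    rw [he1, he2, Real.rpow_natCast N e, Real.rpow_natCast M (e-v)]
  have h4 : (M:ℝ) ^ (e - v : ℕ) * M ^ ((v:ℤ) - (e:ℤ)) = 1 := by
    rw [← zpow_natCast M (e-v), ← zpow_add₀ hM0.ne']
    have : ((e - v : ℕ) : ℤ) + ((v:ℤ) - (e:ℤ)) = 0 := by omega
    rw [this, zpow_zero]
  calc specRad A ^ (2*e-v) * M ^ ((v:ℤ) - (e:ℤ))
      ≤ C ^ (2*e-v) * M ^ ((v:ℤ) - (e:ℤ)) :=
        mul_le_mul_of_nonneg_right h2 (zpow_nonneg hM0.le _)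
    _ = N ^ e * (M ^ (e-v : ℕ) * M ^ ((v:ℤ) - (e:ℤ))) := by rw [h3]; ring
    _ = N ^ e := by rw [h4, mul_one]
end

section
/- Let H be a graph with vertex partition V(H) = U ⊔ W, biadjacency matrix M with ρ = ‖M‖, unit Perron eigenvector x, and write λ = λ(H), λ_U = λ(H[U]). Let μ(U) = Σ_{u∈U} x_u². If (λ − λ_U)² + ρ² > 0, then μ(U) ≤ ρ² / ((λ − λ_U)² + ρ²) ≤ e_H(U,W) / ((λ − λ_U)² + e_H(U,W)). -/
open scoped Classical BigOperators

/-- Adjacency matrix of the induced subgraph on a vertex subset. -/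
noncomputable def inducedMat {n : ℕ} (G : SimpleGraph (Fin n)) (U : Finset (Fin n)) :
    Matrix {x // x ∈ U} {x // x ∈ U} ℝ :=
  fun i j => adjMat G i.1 j.1

/-- Biadjacency matrix of the cut between U and its complement. -/
noncomputable def cutMat {n : ℕ} (G : SimpleGraph (Fin n)) (U : Finset (Fin n)) :
    Matrix {x // x ∈ U} {x // x ∈ Uᶜ} ℝ :=
  fun i j => adjMat G i.1 j.1

section Aux

open Matrix
open scoped RealInnerProductSpace

lemma eig_abs_le {α : Type*} [Fintype α] (A : Matrix α α ℝ) {μ : ℝ} {x : α → ℝ} (hx : x ≠ 0)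
    (h : A.mulVec x = μ • x) : |μ| ≤ ∑ i, ∑ j, |A i j| := by
  obtain ⟨i0, hi0⟩ := Function.ne_iff.1 hx
  obtain ⟨i, -, hi⟩ := Finset.exists_max_image Finset.univ (fun i => |x i|) ⟨i0, Finset.mem_univ _⟩
  have hxi : 0 < |x i| := lt_of_lt_of_le (abs_pos.2 hi0) (hi i0 (Finset.mem_univ _))
  have h1 : |μ| * |x i| = |(A.mulVec x) i| := by
    rw [h]; simp [abs_mul, mul_comm]
  have h2 : |(A.mulVec x) i| ≤ (∑ j, |A i j|) * |x i| := by
    rw [Matrix.mulVec, dotProduct]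
    calc |∑ j, A i j * x j| ≤ ∑ j, |A i j * x j| := Finset.abs_sum_le_sum_abs _ _
      _ ≤ ∑ j, |A i j| * |x i| := by
          refine Finset.sum_le_sum fun j _ => ?_
          rw [abs_mul]
          exact mul_le_mul_of_nonneg_left (hi j (Finset.mem_univ _)) (abs_nonneg _)
      _ = _ := by rw [← Finset.sum_mul]
  have h3 : |μ| ≤ ∑ j, |A i j| := le_of_mul_le_mul_right (h1.le.trans h2) hxi
  exact h3.trans (Finset.single_le_sum (f := fun i => ∑ j, |A i j|)
    (fun i _ => Finset.sum_nonneg fun j _ => abs_nonneg _) (Finset.mem_univ i))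

lemma eigSet_bddAbove {α : Type*} [Fintype α] (A : Matrix α α ℝ) :
    BddAbove {μ : ℝ | ∃ x : α → ℝ, x ≠ 0 ∧ A.mulVec x = μ • x} := by
  refine ⟨∑ i, ∑ j, |A i j|, fun μ hμ => ?_⟩
  obtain ⟨x, hx, h⟩ := hμ
  exact (le_abs_self μ).trans (eig_abs_le A hx h)

lemma rayleigh_le_specRad {α : Type*} [Fintype α] [DecidableEq α] {A : Matrix α α ℝ}
    (hA : A.IsHermitian) (y : α → ℝ) :
    y ⬝ᵥ A.mulVec y ≤ specRad A * (y ⬝ᵥ y) := by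
  set b := hA.eigenvectorBasis with hb
  set y' : EuclideanSpace ℝ α := WithLp.toLp 2 y with hy'
  have hinner : ∀ u v : EuclideanSpace ℝ α, ⟪u, v⟫ = (u : α → ℝ) ⬝ᵥ (v : α → ℝ) := by
    intro u v
    simp [PiLp.inner_apply, RCLike.inner_apply, dotProduct, mul_comm]
  have hsym : ∀ (u v : α → ℝ), u ⬝ᵥ A.mulVec v = (A.mulVec u) ⬝ᵥ v := by
    intro u v
    have hAT : Aᵀ = A := by
      ext i j
      have := congrFun (congrFun hA.eq i) j
      simpa [Matrix.conjTranspose_apply] using this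
    rw [Matrix.dotProduct_mulVec, ← Matrix.mulVec_transpose, hAT]
  have hC : ∀ i, ⟪b i, (WithLp.toLp 2 (A.mulVec y) : EuclideanSpace ℝ α)⟫
      = hA.eigenvalues i * ⟪y', b i⟫ := by
    intro i
    rw [hinner, hinner]
    show (⇑(b i)) ⬝ᵥ A.mulVec y = _
    rw [hsym, hA.mulVec_eigenvectorBasis, smul_dotProduct]
    rw [show (⇑(b i)) ⬝ᵥ y = y ⬝ᵥ (⇑(b i)) from dotProduct_comm _ _]
    rfl
  have h1 : y ⬝ᵥ A.mulVec y = ∑ i, hA.eigenvalues i * (⟪y', b i⟫)^2 := by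
    have := (b.sum_inner_mul_inner y' (WithLp.toLp 2 (A.mulVec y) : EuclideanSpace ℝ α)).symm
    rw [hinner] at this
    rw [show (y' : α → ℝ) ⬝ᵥ ((WithLp.toLp 2 (A.mulVec y) : EuclideanSpace ℝ α) : α → ℝ) = y ⬝ᵥ A.mulVec y from rfl] at this
    rw [this]
    refine Finset.sum_congr rfl fun i _ => ?_
    rw [hC i]; ring
  have h2 : y ⬝ᵥ y = ∑ i, (⟪y', b i⟫)^2 := by
    have := (b.sum_inner_mul_inner y' y').symm
    rw [hinner] at this
    rw [show y' ⬝ᵥ y' = y ⬝ᵥ y from rfl] at this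
    rw [this]
    refine Finset.sum_congr rfl fun i _ => ?_
    rw [real_inner_comm (b i) y']; ring
  have h3 : ∀ i, hA.eigenvalues i ≤ specRad A := by
    intro i
    refine le_csSup (eigSet_bddAbove A) ?_
    refine ⟨⇑(b i), ?_, hA.mulVec_eigenvectorBasis i⟩
    have := b.orthonormal.ne_zero i
    intro h
    apply this
    ext j
    exact congrFun h j
  rw [h1, h2, Finset.mul_sum]
  refine Finset.sum_le_sum fun i _ => ?_
  exact mul_le_mul_of_nonneg_right (h3 i) (sq_nonneg _)

lemma pNorm_two {α : Type*} [Fintype α] (x : α → ℝ) :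
    pNorm 2 x = Real.sqrt (∑ i, x i ^ 2) := by
  unfold pNorm
  rw [Real.sqrt_eq_rpow]
  congr 1
  refine Finset.sum_congr rfl fun i _ => ?_
  rw [show ((2:ℝ)) = ((2:ℕ):ℝ) by norm_num, Real.rpow_natCast, sq_abs]

lemma pNorm_two_nonneg {α : Type*} [Fintype α] (x : α → ℝ) : 0 ≤ pNorm 2 x := by
  rw [pNorm_two]; exact Real.sqrt_nonneg _

lemma pNorm_two_pos {α : Type*} [Fintype α] {x : α → ℝ} (hx : x ≠ 0) : 0 < pNorm 2 x := by
  rw [pNorm_two]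
  apply Real.sqrt_pos.2
  obtain ⟨i0, hi0⟩ := Function.ne_iff.1 hx
  have : 0 < x i0 ^ 2 := by have := sq_abs (x i0) ▸ pow_pos (abs_pos.2 hi0) 2; simpa [sq_abs] using this
  exact lt_of_lt_of_le this (Finset.single_le_sum (fun i _ => sq_nonneg (x i)) (Finset.mem_univ i0))

lemma frob_bound {α β : Type*} [Fintype α] [Fintype β] (M : Matrix β α ℝ) (z : α → ℝ) :
    pNorm 2 (M.mulVec z) ≤ Real.sqrt (∑ i, ∑ j, M i j ^ 2) * pNorm 2 z := by
  rw [pNorm_two, pNorm_two, ← Real.sqrt_mul (show (0:ℝ) ≤ ∑ i, ∑ j, M i j ^ 2 from Finset.sum_nonneg fun i _ =>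
    Finset.sum_nonneg fun j _ => sq_nonneg _)]
  apply Real.sqrt_le_sqrt
  rw [Finset.sum_mul]
  refine Finset.sum_le_sum fun i _ => ?_
  have : (M.mulVec z) i = ∑ j, M i j * z j := rfl
  rw [this]
  exact Finset.sum_mul_sq_le_sq_mul_sq Finset.univ _ _

lemma opNorm_nonneg' {α β : Type*} [Fintype α] [Fintype β] (M : Matrix β α ℝ) :
    0 ≤ opNorm 2 2 M := by
  apply Real.sSup_nonneg
  rintro c ⟨x, hx, rfl⟩
  exact div_nonneg (pNorm_two_nonneg _) (pNorm_two_nonneg _)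

lemma opNorm_le_frob {α β : Type*} [Fintype α] [Fintype β] (M : Matrix β α ℝ) :
    opNorm 2 2 M ≤ Real.sqrt (∑ i, ∑ j, M i j ^ 2) := by
  apply Real.sSup_le
  · rintro c ⟨x, hx, rfl⟩
    rw [div_le_iff₀ (pNorm_two_pos hx)]
    exact frob_bound M x
  · exact Real.sqrt_nonneg _

lemma opNorm_bddAbove {α β : Type*} [Fintype α] [Fintype β] (M : Matrix β α ℝ) :
    BddAbove {c : ℝ | ∃ x : α → ℝ, x ≠ 0 ∧ c = pNorm 2 (M.mulVec x) / pNorm 2 x} := by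
  refine ⟨Real.sqrt (∑ i, ∑ j, M i j ^ 2), ?_⟩
  rintro c ⟨x, hx, rfl⟩
  rw [div_le_iff₀ (pNorm_two_pos hx)]
  exact frob_bound M x

lemma opNorm_mulVec_le_s9 {α β : Type*} [Fintype α] [Fintype β] (M : Matrix β α ℝ) (z : α → ℝ) :
    pNorm 2 (M.mulVec z) ≤ opNorm 2 2 M * pNorm 2 z := by
  by_cases hz : z = 0
  · subst hz
    rw [Matrix.mulVec_zero]
    have h0 : pNorm 2 (0 : β → ℝ) = 0 := by rw [pNorm_two]; simp
    have h0' : pNorm 2 (0 : α → ℝ) = 0 := by rw [pNorm_two]; simp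
    rw [h0, h0', mul_zero]
  · have : pNorm 2 (M.mulVec z) / pNorm 2 z ≤ opNorm 2 2 M :=
      le_csSup (opNorm_bddAbove M) ⟨z, hz, rfl⟩
    rwa [div_le_iff₀ (pNorm_two_pos hz)] at this

lemma opNorm_sq_le_frob_sq {α β : Type*} [Fintype α] [Fintype β] (M : Matrix β α ℝ) :
    opNorm 2 2 M ^ 2 ≤ ∑ i, ∑ j, M i j ^ 2 := by
  have h1 := opNorm_le_frob M
  have h2 := opNorm_nonneg' M
  have h3 : (0:ℝ) ≤ ∑ i, ∑ j, M i j ^ 2 :=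
    Finset.sum_nonneg fun i _ => Finset.sum_nonneg fun j _ => sq_nonneg _
  nlinarith [Real.sq_sqrt h3, Real.sqrt_nonneg (∑ i, ∑ j, M i j ^ 2)]

lemma dot_le_pNorm {γ : Type*} [Fintype γ] (a b : γ → ℝ) :
    a ⬝ᵥ b ≤ pNorm 2 a * pNorm 2 b := by
  rw [pNorm_two, pNorm_two, ← Real.sqrt_mul (Finset.sum_nonneg fun i _ => sq_nonneg _)]
  calc a ⬝ᵥ b ≤ |a ⬝ᵥ b| := le_abs_self _
    _ = Real.sqrt ((a ⬝ᵥ b)^2) := (Real.sqrt_sq_eq_abs _).symm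
    _ ≤ _ := Real.sqrt_le_sqrt (Finset.sum_mul_sq_le_sq_mul_sq Finset.univ _ _)

lemma sum_extend {n : ℕ} (U : Finset (Fin n)) (g : Fin n → ℝ) (w : {x // x ∈ U} → ℝ) :
    ∑ v, g v * (if h : v ∈ U then w ⟨v, h⟩ else 0)
      = ∑ i : {x // x ∈ U}, g i.1 * w i := by
  rw [show (∑ i : {x // x ∈ U}, g i.1 * w i)
      = ∑ i : {x // x ∈ U}, g i.1 * (if h : (i:Fin n) ∈ U then w ⟨i, h⟩ else 0) from
    Finset.sum_congr rfl fun i _ => by rw [dif_pos i.2]]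
  rw [Finset.sum_coe_sort U (fun v => g v * (if h : v ∈ U then w ⟨v, h⟩ else 0))]
  exact (Finset.sum_subset (Finset.subset_univ U) (fun v _ hv => by rw [dif_neg hv, mul_zero])).symm

end Aux

/-- Spectral cut bound (c): if x is a unit Perron eigenvector of H and
(λ − λ_U)² + ρ² > 0 with ρ = ‖M‖, then the Perron mass of U satisfies
μ(U) ≤ ρ²/((λ−λ_U)²+ρ²) ≤ e_H(U,W)/((λ−λ_U)²+e_H(U,W)). -/
theorem stmt9 (n : ℕ) (G : SimpleGraph (Fin n)) (U : Finset (Fin n))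
    (x : Fin n → ℝ) (hx0 : ∀ v, 0 ≤ x v) (hx1 : ∑ v, x v ^ 2 = 1)
    (heig : (adjMat G).mulVec x = specRad (adjMat G) • x)
    (hpos : (specRad (adjMat G) - specRad (inducedMat G U)) ^ 2
        + opNorm 2 2 (cutMat G U) ^ 2 > 0) :
    (∑ u ∈ U, x u ^ 2)
        ≤ opNorm 2 2 (cutMat G U) ^ 2
            / ((specRad (adjMat G) - specRad (inducedMat G U)) ^ 2
                + opNorm 2 2 (cutMat G U) ^ 2) ∧
      opNorm 2 2 (cutMat G U) ^ 2
          / ((specRad (adjMat G) - specRad (inducedMat G U)) ^ 2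
              + opNorm 2 2 (cutMat G U) ^ 2)
        ≤ (∑ u ∈ U, ∑ w ∈ Uᶜ, if G.Adj u w then (1 : ℝ) else 0)
            / ((specRad (adjMat G) - specRad (inducedMat G U)) ^ 2
                + ∑ u ∈ U, ∑ w ∈ Uᶜ, if G.Adj u w then (1 : ℝ) else 0) := by
  classical
  open Matrix in
  set A := adjMat G with hA
  set lam := specRad A with hlam
  set L := specRad (inducedMat G U) with hLdef
  set ρ := opNorm 2 2 (cutMat G U) with hρ
  set e := ∑ u ∈ U, ∑ w ∈ Uᶜ, if G.Adj u w then (1:ℝ) else 0 with he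
  set μ := ∑ u ∈ U, x u ^ 2 with hμ
  have hAsym : A.IsHermitian := by
    ext i j
    simp only [hA, adjMat, Matrix.conjTranspose_apply, star_trivial]
    rw [G.adj_comm]
  have hBsym : (inducedMat G U).IsHermitian := by
    ext i j
    simp only [inducedMat, adjMat, Matrix.conjTranspose_apply, star_trivial]
    rw [G.adj_comm]
  have hA0 : ∀ i j, 0 ≤ A i j := by
    intro i j
    simp only [hA, adjMat]
    split <;> norm_num
  -- λ ≥ 0
  have hxx : x ⬝ᵥ x = 1 := by
    rw [dotProduct, ← hx1]
    exact Finset.sum_congr rfl fun v _ => (sq (x v)).symm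
  have hlam0 : 0 ≤ lam := by
    have h1 : x ⬝ᵥ A.mulVec x = lam := by
      rw [heig]
      rw [dotProduct_smul, smul_eq_mul, hxx, mul_one]
    rw [← h1, dotProduct]
    refine Finset.sum_nonneg fun i _ => mul_nonneg (hx0 i) ?_
    rw [show (A.mulVec x) i = ∑ j, A i j * x j from rfl]
    exact Finset.sum_nonneg fun j _ => mul_nonneg (hA0 i j) (hx0 j)
  -- λ_U ≤ λ
  have hLlam : L ≤ lam := by
    rw [hLdef]
    apply Real.sSup_le _ hlam0
    rintro m ⟨w, hw, hmw⟩
    set w' : Fin n → ℝ := fun v => if h : v ∈ U then w ⟨v, h⟩ else 0 with hw'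
    have hext : ∀ g : Fin n → ℝ, ∑ v, g v * w' v = ∑ i : {x // x ∈ U}, g i.1 * w i :=
      fun g => sum_extend U g w
    have h1 : w' ⬝ᵥ A.mulVec w' = w ⬝ᵥ (inducedMat G U).mulVec w := by
      rw [dotProduct]
      have hin : ∀ v, (A.mulVec w') v = ∑ i : {x // x ∈ U}, A v i.1 * w i := by
        intro v
        rw [show (A.mulVec w') v = ∑ j, A v j * w' j from rfl]
        exact hext (A v)
      calc ∑ v, w' v * (A.mulVec w') v
          = ∑ v, (A.mulVec w') v * w' v := by
            exact Finset.sum_congr rfl fun v _ => mul_comm _ _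
        _ = ∑ j : {x // x ∈ U}, (A.mulVec w') j.1 * w j := hext _
        _ = ∑ j : {x // x ∈ U}, w j * ∑ i : {x // x ∈ U}, (inducedMat G U) j i * w i := by
            refine Finset.sum_congr rfl fun j _ => ?_
            rw [hin j.1, mul_comm]
            rfl
        _ = w ⬝ᵥ (inducedMat G U).mulVec w := rfl
    have h2 : w' ⬝ᵥ w' = w ⬝ᵥ w := by
      rw [dotProduct]
      calc ∑ v, w' v * w' v = ∑ i : {x // x ∈ U}, w' i.1 * w i := hext w'
        _ = ∑ i : {x // x ∈ U}, w i * w i := by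
            refine Finset.sum_congr rfl fun i _ => ?_
            congr 1
            simp only [hw', dif_pos i.2]
        _ = w ⬝ᵥ w := rfl
    have h3 := rayleigh_le_specRad hAsym w'
    rw [h1, h2] at h3
    have h4 : w ⬝ᵥ (inducedMat G U).mulVec w = m * (w ⬝ᵥ w) := by
      rw [hmw, dotProduct_smul, smul_eq_mul]
    have hww : 0 < w ⬝ᵥ w := by
      obtain ⟨i0, hi0⟩ := Function.ne_iff.1 hw
      rw [dotProduct]
      have hi0' : w i0 ≠ 0 := by simpa using hi0
      exact Finset.sum_pos' (fun i _ => mul_self_nonneg _)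
        ⟨i0, Finset.mem_univ _, mul_self_pos.2 hi0'⟩
    rw [h4] at h3
    exact le_of_mul_le_mul_right (by linarith) hww
  -- restrictions of x
  set y : {v // v ∈ U} → ℝ := fun i => x i.1 with hy
  set z : {v // v ∈ Uᶜ} → ℝ := fun j => x j.1 with hz
  have hμ0 : 0 ≤ μ := Finset.sum_nonneg fun u _ => sq_nonneg _
  have hcompl : μ + ∑ w ∈ Uᶜ, x w ^ 2 = 1 := by
    rw [hμ, ← hx1]; exact Finset.sum_add_sum_compl U _
  have hμ1 : μ ≤ 1 := by
    have h : (0:ℝ) ≤ ∑ w ∈ Uᶜ, x w ^ 2 := Finset.sum_nonneg fun u _ => sq_nonneg _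
    linarith
  have hyy : ∑ i : {v // v ∈ U}, y i ^ 2 = μ := by
    rw [hμ]; exact Finset.sum_coe_sort U (fun v => x v ^ 2)
  have hzz : ∑ j : {v // v ∈ Uᶜ}, z j ^ 2 = 1 - μ := by
    rw [show (∑ j : {v // v ∈ Uᶜ}, z j ^ 2) = ∑ w ∈ Uᶜ, x w ^ 2 from
      Finset.sum_coe_sort Uᶜ (fun v => x v ^ 2)]
    linarith
  -- main identity
  have inner1 : ∀ u : Fin n, ∑ j : {v // v ∈ U}, A u j.1 * x j.1 = ∑ v ∈ U, A u v * x v :=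
    fun u => Finset.sum_coe_sort U (fun v => A u v * x v)
  have inner2 : ∀ u : Fin n, ∑ j : {v // v ∈ Uᶜ}, A u j.1 * x j.1 = ∑ v ∈ Uᶜ, A u v * x v :=
    fun u => Finset.sum_coe_sort Uᶜ (fun v => A u v * x v)
  have first : y ⬝ᵥ (inducedMat G U).mulVec y = ∑ u ∈ U, x u * ∑ v ∈ U, A u v * x v := by
    calc y ⬝ᵥ (inducedMat G U).mulVec y
        = ∑ i : {v // v ∈ U}, x i.1 * ∑ j : {v // v ∈ U}, A i.1 j.1 * x j.1 := rfl
      _ = ∑ i : {v // v ∈ U}, x i.1 * ∑ v ∈ U, A i.1 v * x v :=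
          Finset.sum_congr rfl fun i _ => by rw [inner1]
      _ = ∑ u ∈ U, x u * ∑ v ∈ U, A u v * x v :=
          Finset.sum_coe_sort U (fun u => x u * ∑ v ∈ U, A u v * x v)
  have second : y ⬝ᵥ (cutMat G U).mulVec z = ∑ u ∈ U, x u * ∑ v ∈ Uᶜ, A u v * x v := by
    calc y ⬝ᵥ (cutMat G U).mulVec z
        = ∑ i : {v // v ∈ U}, x i.1 * ∑ j : {v // v ∈ Uᶜ}, A i.1 j.1 * x j.1 := rfl
      _ = ∑ i : {v // v ∈ U}, x i.1 * ∑ v ∈ Uᶜ, A i.1 v * x v :=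
          Finset.sum_congr rfl fun i _ => by rw [inner2]
      _ = ∑ u ∈ U, x u * ∑ v ∈ Uᶜ, A u v * x v :=
          Finset.sum_coe_sort U (fun u => x u * ∑ v ∈ Uᶜ, A u v * x v)
  have hmain : lam * μ = y ⬝ᵥ (inducedMat G U).mulVec y + y ⬝ᵥ (cutMat G U).mulVec z := by
    have hT1 : ∑ u ∈ U, x u * (A.mulVec x) u = lam * μ := by
      calc ∑ u ∈ U, x u * (A.mulVec x) u = ∑ u ∈ U, x u * (lam * x u) := by
            refine Finset.sum_congr rfl fun u _ => ?_
            rw [heig]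
            rfl
        _ = lam * μ := by
            rw [hμ, Finset.mul_sum]
            exact Finset.sum_congr rfl fun u _ => by ring
    have hT2 : ∑ u ∈ U, x u * (A.mulVec x) u
        = ∑ u ∈ U, x u * ∑ v ∈ U, A u v * x v + ∑ u ∈ U, x u * ∑ v ∈ Uᶜ, A u v * x v := by
      rw [← Finset.sum_add_distrib]
      refine Finset.sum_congr rfl fun u _ => ?_
      rw [← mul_add]
      congr 1
      rw [show (A.mulVec x) u = ∑ v, A u v * x v from rfl]
      exact (Finset.sum_add_sum_compl U _).symm
    rw [← hT1, hT2, first, second]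
  -- Rayleigh bound on the induced part
  have hyyμ : y ⬝ᵥ y = μ := by
    rw [dotProduct, ← hyy]
    exact Finset.sum_congr rfl fun i _ => (sq (y i)).symm
  have hRB : y ⬝ᵥ (inducedMat G U).mulVec y ≤ L * μ := by
    have h := rayleigh_le_specRad hBsym y
    rwa [hyyμ, ← hLdef] at h
  -- cut bound
  have hcut : y ⬝ᵥ (cutMat G U).mulVec z ≤ ρ * (Real.sqrt μ * Real.sqrt (1 - μ)) := by
    calc y ⬝ᵥ (cutMat G U).mulVec z
        ≤ pNorm 2 y * pNorm 2 ((cutMat G U).mulVec z) := dot_le_pNorm _ _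
      _ ≤ pNorm 2 y * (opNorm 2 2 (cutMat G U) * pNorm 2 z) :=
          mul_le_mul_of_nonneg_left (opNorm_mulVec_le_s9 _ _) (pNorm_two_nonneg y)
      _ = ρ * (Real.sqrt μ * Real.sqrt (1 - μ)) := by
          rw [pNorm_two, pNorm_two, hyy, hzz, ← hρ]
          ring
  have key : (lam - L) * μ ≤ ρ * (Real.sqrt μ * Real.sqrt (1 - μ)) := by
    have : lam * μ ≤ L * μ + ρ * (Real.sqrt μ * Real.sqrt (1 - μ)) := by
      rw [hmain]; exact add_le_add hRB hcut
    linarith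
  have hρ0 : 0 ≤ ρ := opNorm_nonneg' _
  constructor
  · -- first inequality
    rw [le_div_iff₀ hpos]
    have hDμ : 0 ≤ (lam - L) * μ := mul_nonneg (by linarith) hμ0
    have hsq : ((lam - L) * μ) ^ 2 ≤ ρ ^ 2 * (μ * (1 - μ)) := by
      have h1 : ((lam - L) * μ) ^ 2 ≤ (ρ * (Real.sqrt μ * Real.sqrt (1 - μ))) ^ 2 :=
        pow_le_pow_left₀ hDμ key 2
      have h2 : (ρ * (Real.sqrt μ * Real.sqrt (1 - μ))) ^ 2 = ρ ^ 2 * (μ * (1 - μ)) := by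
        rw [mul_pow, mul_pow, Real.sq_sqrt hμ0, Real.sq_sqrt (by linarith : (0:ℝ) ≤ 1 - μ)]
      rw [← h2]; exact h1
    rcases eq_or_lt_of_le hμ0 with h0 | hμpos
    · rw [← h0, zero_mul]
      exact sq_nonneg ρ
    · nlinarith [hsq, hμpos, mul_pos hμpos hμpos]
  · -- second inequality
    have he2 : ρ ^ 2 ≤ e := by
      have h := opNorm_sq_le_frob_sq (cutMat G U)
      rw [← hρ] at h
      refine h.trans (le_of_eq ?_)
      calc ∑ i : {v // v ∈ U}, ∑ j : {v // v ∈ Uᶜ}, (cutMat G U i j) ^ 2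
          = ∑ i : {v // v ∈ U}, ∑ w ∈ Uᶜ, (A i.1 w) ^ 2 :=
            Finset.sum_congr rfl fun i _ => Finset.sum_coe_sort Uᶜ (fun w => (A i.1 w) ^ 2)
        _ = ∑ u ∈ U, ∑ w ∈ Uᶜ, (A u w) ^ 2 :=
            Finset.sum_coe_sort U (fun u => ∑ w ∈ Uᶜ, (A u w) ^ 2)
        _ = e := by
            rw [he]
            refine Finset.sum_congr rfl fun u _ => Finset.sum_congr rfl fun w _ => ?_
            simp only [hA, adjMat]
            split <;> norm_num
    have hd2 : 0 < (lam - L) ^ 2 + e := by nlinarith [hpos, he2]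
    rw [div_le_div_iff₀ hpos hd2]
    nlinarith [mul_le_mul_of_nonneg_right he2 (sq_nonneg (lam - L))]
end
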